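/- arXiv:2201.06148 — 5 statements merged into one kernel-verified Lean document; each statement's English description precedes it below -/
import Mathlib

section
/- Let A be an associative unital algebra over the field k = ℚ(u, ω) (or any field in which 1-u, u+ω/2-1, and their counterparts at -u are invertible), and let P, K ∈ A satisfy P² = 1, K² = ω·K, PK = KP = K. Define R(u) = (1/(1-u))·(u·1 + P - (u/(u+ω/2-1))·K). Then R(u) is unitary in the sense that P·R(u)·P·R(-u) = 1. -/
/-- Unitarity `P·R(u)·P·R(-u) = 1` of the `osp(M|N)`-invariant rational Yang–Baxter solution
in the defining representation, using only the Brauer-type relations among `P` and `K`. -/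
theorem osp_R_matrix_unitarity {F A : Type*} [Field F] [CharZero F]
    [Ring A] [Algebra F A] (ω u : F)
    (h₁ : (1 : F) - u ≠ 0) (h₂ : u + ω / 2 - 1 ≠ 0)
    (h₃ : (1 : F) + u ≠ 0) (h₄ : -u + ω / 2 - 1 ≠ 0)
    (P K R R' : A)
    (hP : P ^ 2 = 1) (hK : K ^ 2 = ω • K) (hPK : P * K = K) (hKP : K * P = K)
    (hR : R = (1 / (1 - u)) • (u • (1 : A) + P - (u / (u + ω / 2 - 1)) • K))
    (hR' : R' = (1 / (1 + u)) • ((-u) • (1 : A) + P - ((-u) / (-u + ω / 2 - 1)) • K)) :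
    P * R * P * R' = 1 := by
  have hP2 : P * P = 1 := by rw [← pow_two]; exact hP
  have hK2 : K * K = ω • K := by rw [← pow_two]; exact hK
  have h₂' : 2 * u + ω - 2 ≠ 0 := fun h => h₂ (by linear_combination h / 2)
  have h₄' : -(2 * u) + ω - 2 ≠ 0 := fun h => h₄ (by linear_combination h / 2)
  have h₅ : u * 2 + ω - 2 ≠ 0 := fun h => h₂' (by linear_combination h)
  have h₆ : -(u * 2) + ω - 2 ≠ 0 := fun h => h₄ (by linear_combination h / 2)
  have hD1 : -2 + u * 4 + (-(u * ω) - u ^ 2 * 2) + ω ≠ 0 := by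
    have h : -2 + u * 4 + (-(u * ω) - u ^ 2 * 2) + ω = 2 * ((1 - u) * (u + ω / 2 - 1)) := by
      ring
    rw [h]
    exact mul_ne_zero two_ne_zero (mul_ne_zero h₁ h₂)
  have hD2 : -2 - u * ω + u ^ 2 * 2 + ω ≠ 0 := by
    have h : -2 - u * ω + u ^ 2 * 2 + ω = 2 * ((1 - u) * (-u + ω / 2 - 1)) := by ring
    rw [h]
    exact mul_ne_zero two_ne_zero (mul_ne_zero h₁ h₄)
  have hD3 : -2 + u * 2 + ω ≠ 0 := fun h => h₂ (by linear_combination h / 2)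
  have hD4 : 4 - u * 4 + u * ω * 4 + (-(u * ω ^ 2) - u ^ 2 * 4) + (u ^ 3 * 4 - ω * 4) + ω ^ 2
      ≠ 0 := by
    have h : 4 - u * 4 + u * ω * 4 + (-(u * ω ^ 2) - u ^ 2 * 4) + (u ^ 3 * 4 - ω * 4) + ω ^ 2
        = 4 * ((1 - u) * ((u + ω / 2 - 1) * (-u + ω / 2 - 1))) := by ring
    rw [h]
    exact mul_ne_zero (by norm_num) (mul_ne_zero h₁ (mul_ne_zero h₂ h₄))
  subst hR hR'
  simp only [mul_add, add_mul, mul_sub, sub_mul, smul_mul_assoc, mul_smul_comm,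
    mul_one, one_mul, hPK, hKP, hP2, hK2, smul_smul]
  match_scalars
  all_goals repeat (first | ring1 | field_simp)
end

section
/- Let A be an associative unital algebra over a field k of characteristic 0, ω ∈ k with ω ≠ 0, 2, and P, K ∈ A with P² = 1, K² = ωK, PK = KP = K. Set C = (1/(2(ω-2)))(P - K) and R(u) = (1/(1-u))·(u + P - (u/(u+ω/2-1))·K) for u ∈ k such that all denominators are nonzero. Then R(u)·((ω-2)C + 1/2 - u) = (ω-2)C + 1/2 + u; i.e., R(u) is the rational function ((ω-2)C + 1/2 + u)/((ω-2)C + 1/2 - u) of the split Casimir operator C. -/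
/-- The `osp(M|N)`-invariant Yang–Baxter solution in the defining representation is the
rational function `((ω-2)C + 1/2 + u)/((ω-2)C + 1/2 - u)` of the split Casimir operator `C`. -/
theorem osp_R_matrix_as_function_of_casimir {F A : Type*} [Field F] [CharZero F]
    [Ring A] [Algebra F A] (ω u : F) (hω0 : ω ≠ 0) (hω2 : ω ≠ 2)
    (h₁ : (1 : F) - u ≠ 0) (h₂ : u + ω / 2 - 1 ≠ 0)
    (P K C R : A)
    (hP : P ^ 2 = 1) (hK : K ^ 2 = ω • K) (hPK : P * K = K) (hKP : K * P = K)
    (hC : C = (1 / (2 * (ω - 2))) • (P - K))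
    (hR : R = (1 / (1 - u)) • (u • (1 : A) + P - (u / (u + ω / 2 - 1)) • K)) :
    R * ((ω - 2) • C + (1 / 2 - u) • (1 : A)) = (ω - 2) • C + (1 / 2 + u) • (1 : A) := by
  have hPP : P * P = 1 := by rw [← pow_two]; exact hP
  have hKK : K * K = ω • K := by rw [← pow_two]; exact hK
  have h3 : ω - 2 ≠ 0 := sub_ne_zero.mpr hω2
  have hC2 : (ω - 2) • C = (2 : F)⁻¹ • (P - K) := by
    rw [hC, smul_smul]
    congr 1
    field_simp
  have e2 : (u + ω / 2 - 1) * (u / (u + ω / 2 - 1)) = u := by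
    rw [mul_comm, div_mul_cancel₀ _ h₂]
  have hd : ((1 - u) * (u + ω / 2 - 1)) • R
      = ((u + ω / 2 - 1) * u) • (1 : A) + (u + ω / 2 - 1) • P - u • K := by
    rw [hR, smul_smul]
    have e1 : (1 - u) * (u + ω / 2 - 1) * (1 / (1 - u)) = u + ω / 2 - 1 := by
      field_simp
    rw [e1, smul_sub, smul_add, smul_smul, smul_smul, e2]
  rw [hC2]
  apply smul_right_injective A (mul_ne_zero h₁ h₂)
  dsimp only
  rw [← smul_mul_assoc, hd]
  simp only [mul_add, mul_sub, add_mul, sub_mul, smul_add, smul_sub, mul_smul_comm,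
    smul_mul_assoc, smul_smul, hPP, hPK, hKP, hKK, one_mul, mul_one]
  match_scalars <;> ring
end

section
/- Let A be an associative unital algebra over a field k of characteristic 0, let n, μ₁, μ₂ ∈ k with μ₂ ≠ 0, and let C, P, K ∈ A satisfy: C³ + (1/2)C² = μ₁·C + μ₂·(1 + P - 2K), K·(1+P) = 2K, K·C = C·K = -K, and K² = n·K, with K ≠ 0. Then n = (2μ₂ - μ₁ + 1/2)/(2μ₂). -/
/-- From the universal cubic identity for the symmetric part `C = Ĉ₊` of the split Casimir
operator together with the relations involving `P` and `K` (with `K² = n·K`), the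
superdimension `n` is recovered as `(2μ₂ - μ₁ + 1/2)/(2μ₂)`. -/
theorem superdimension_from_universal_cubic {F A : Type*} [Field F] [CharZero F]
    [Ring A] [Algebra F A] (n μ₁ μ₂ : F) (hμ₂ : μ₂ ≠ 0)
    (C P K : A)
    (hcube : C ^ 3 + (1 / 2 : F) • C ^ 2 = μ₁ • C + μ₂ • (1 + P - (2 : F) • K))
    (hKP : K * (1 + P) = (2 : F) • K)
    (hKC : K * C = -K) (hCK : C * K = -K)
    (hK2 : K ^ 2 = n • K)
    (hKne : K ≠ 0)
    (hfaith : ∀ c : F, c • K = 0 → c = 0) :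
    n = (2 * μ₂ - μ₁ + 1 / 2) / (2 * μ₂) := by
  have h1 : K * C ^ 2 = K := by
    rw [pow_two, ← mul_assoc, hKC, neg_mul, hKC, neg_neg]
  have h2 : K * C ^ 3 = -K := by
    rw [pow_succ, ← mul_assoc, h1, hKC]
  have h := congrArg (fun x => K * x) hcube
  simp only [mul_add, mul_sub, mul_smul_comm, mul_one] at h
  have hKP' : K * P = (2:F) • K - K := by
    have := hKP; rw [mul_add, mul_one] at this
    rw [← this]; abel
  rw [h1, h2, hKC, hKP'] at h
  have hKK : K * K = n • K := by rw [← pow_two, hK2]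
  rw [hKK] at h
  have h' : ((-1 + 1/2 + μ₁ - 2*μ₂ + 2*μ₂*n) : F) • K = 0 := by
    linear_combination (norm := module) h
  have hc := hfaith _ h'
  field_simp
  linear_combination 2 * hc
end

section
/- Let A be an associative unital algebra over a field of characteristic 0, let μ₁, μ₂ be scalars, and let C, P, K ∈ A satisfy: C³ + (1/2)C² = μ₁C + μ₂(1 + P - 2K), P·C = C·P = C, K·C = C·K = -K, and K·(1+P) = 2K. Then C·(C + 1)·(C³ + (1/2)C² - μ₁C - 2μ₂·1) = 0. -/
/-- The universal quintic characteristic identity for the symmetric part `C = Ĉ₊` of the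
split Casimir operator in the adjoint tensor square follows from the universal cubic identity
and the relations with `P` and `K`. -/
theorem universal_quintic_identity {F A : Type*} [Field F] [CharZero F]
    [Ring A] [Algebra F A] (μ₁ μ₂ : F) (C P K : A)
    (hcube : C ^ 3 + (1 / 2 : F) • C ^ 2 = μ₁ • C + μ₂ • (1 + P - (2 : F) • K))
    (hPC : P * C = C) (hCP : C * P = C)
    (hKC : K * C = -K) (hCK : C * K = -K)
    (hKP : K * (1 + P) = (2 : F) • K) :
    C * (C + 1) * (C ^ 3 + (1 / 2 : F) • C ^ 2 - μ₁ • C - (2 * μ₂) • (1 : A)) = 0 := by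
  have h1 : C ^ 3 + (1 / 2 : F) • C ^ 2 - μ₁ • C - (2 * μ₂) • (1 : A)
      = μ₂ • (P - 1 - (2 : F) • K) := by
    rw [hcube]; module
  have hA : (C + 1) * (P - 1 - (2 : F) • K) = P - 1 := by
    simp [mul_sub, add_mul, mul_smul_comm, hCP, hCK]
  have hB : C * (P - 1) = 0 := by
    simp [mul_sub, hCP]
  rw [h1, mul_smul_comm, mul_assoc, hA, hB, smul_zero]
end

section
/- Let A be an associative unital algebra over a field of characteristic 0, and let P₋, Ĉ₋, C̃₋ ∈ A satisfy: P₋² = P₋; P₋Ĉ₋ = Ĉ₋P₋ = Ĉ₋; P₋C̃₋ = C̃₋P₋ = C̃₋; Ĉ₋² = -(1/2)Ĉ₋; C̃₋Ĉ₋ = Ĉ₋C̃₋ = 0; and C̃₋² = 2Ĉ₋ + P₋. Then C̃₋·(C̃₋ + P₋)·(C̃₋ - P₋) = 0, and the three elements Q₀ = -2Ĉ₋, Q₋₁ = Ĉ₋ + (1/2)P₋ - (1/2)C̃₋, Q₁ = Ĉ₋ + (1/2)P₋ + (1/2)C̃₋ are pairwise orthogonal idempotents with Q₀ + Q₋₁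 + Q₁ = P₋. -/
/-- For `sl(M|N)`: the additional invariant operator `C̃₋` satisfies a cubic characteristic
identity on the antisymmetric part, and the resulting three operators are pairwise orthogonal
idempotents summing to the antisymmetrizer `P₋`. -/
theorem sl_antisymmetric_fine_projectors {F A : Type*} [Field F] [CharZero F]
    [Ring A] [Algebra F A] (Pm Cm Ct : A)
    (hPm : Pm * Pm = Pm)
    (hPmCm : Pm * Cm = Cm) (hCmPm : Cm * Pm = Cm)
    (hPmCt : Pm * Ct = Ct) (hCtPm : Ct * Pm = Ct)
    (hCm2 : Cm ^ 2 = (-(1 / 2) : F) • Cm)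
    (hCtCm : Ct * Cm = 0) (hCmCt : Cm * Ct = 0)
    (hCt2 : Ct ^ 2 = (2 : F) • Cm + Pm)
    (Q₀ Qm Qp : A)
    (hQ₀ : Q₀ = (-2 : F) • Cm)
    (hQm : Qm = Cm + (1 / 2 : F) • Pm - (1 / 2 : F) • Ct)
    (hQp : Qp = Cm + (1 / 2 : F) • Pm + (1 / 2 : F) • Ct) :
    Ct * (Ct + Pm) * (Ct - Pm) = 0 ∧
    Q₀ * Q₀ = Q₀ ∧ Qm * Qm = Qm ∧ Qp * Qp = Qp ∧
    Q₀ * Qm = 0 ∧ Qm * Q₀ = 0 ∧ Q₀ * Qp = 0 ∧ Qp * Q₀ = 0 ∧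
    Qm * Qp = 0 ∧ Qp * Qm = 0 ∧
    Q₀ + Qm + Qp = Pm := by
  rw [pow_two] at hCm2 hCt2
  subst hQ₀ hQm hQp
  refine ⟨?_, ?_, ?_, ?_, ?_, ?_, ?_, ?_, ?_, ?_, ?_⟩ <;>
  first
    | (simp only [mul_add, add_mul, mul_sub, sub_mul, smul_mul_assoc, mul_smul_comm,
        smul_smul, hPm, hPmCm, hCmPm, hPmCt, hCtPm, hCm2, hCtCm, hCmCt, hCt2,
        smul_add, smul_zero, mul_zero, zero_mul]; module)
    | module
end
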